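/- Let a ∈ ℝ, b < 1, c < 1, T > 0 and M ≥ 2 an integer, with t_j = jT/M. Then there exists C = C(a,b,c,T) > 0 such that sup over 2 ≤ m ≤ M of the double sum over 0 ≤ i < j ≤ m−1 of ∫_{t_i}^{t_{i+1}} ∫_{t_j}^{t_{j+1}} (t_m−s)^{−a} (t_m−τ)^{−b} (τ−s)^{−c} dτ ds is bounded by C if a+b+c < 2, by C ln M if a+b+c = 2, and by C M^{a+b+c−2} if a+b+c > 2. -/

import Mathlib

open MeasureTheory intervalIntegral

lemma rpow_le_add_of_mem {A B x e : ℝ} (hA : 0 < A) (hAx : A ≤ x) (hxB : x ≤ B) :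
    x ^ e ≤ A ^ e + B ^ e := by
  rcases le_or_gt 0 e with he | he
  · have h1 : x ^ e ≤ B ^ e := Real.rpow_le_rpow (by linarith) hxB he
    have h2 : 0 ≤ A ^ e := Real.rpow_nonneg hA.le e
    linarith
  · have h1 : x ^ e ≤ A ^ e := Real.rpow_le_rpow_of_nonpos hA hAx he.le
    have h2 : 0 ≤ B ^ e := Real.rpow_nonneg (by linarith) e
    linarith

lemma meas_aux (w s p q : ℝ) :
    Measurable (fun τ : ℝ => (w - τ) ^ (-p) * (τ - s) ^ (-q)) := by fun_prop

lemma int_left {q : ℝ} (hq : q < 1) (s d : ℝ) :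
    IntervalIntegrable (fun τ => (τ - s) ^ (-q)) volume s (s + d) := by
  have h := intervalIntegral.intervalIntegrable_rpow' (a := 0) (b := d)
    (show (-1 : ℝ) < -q by linarith)
  simpa [add_comm] using h.comp_sub_right s

lemma int_right {p : ℝ} (hp : p < 1) (w d : ℝ) :
    IntervalIntegrable (fun τ => (w - τ) ^ (-p)) volume (w - d) w := by
  have h := intervalIntegral.intervalIntegrable_rpow' (a := 0) (b := d)
    (show (-1 : ℝ) < -p by linarith)
  simpa using (h.comp_sub_left w).symm

lemma betaIntegrable {p q : ℝ} (hp : p < 1) (hq : q < 1) {s w : ℝ} (hsw : s < w) :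
    IntervalIntegrable (fun τ => (w - τ) ^ (-p) * (τ - s) ^ (-q)) volume s w := by
  set mid : ℝ := (s + w) / 2 with hmiddef
  have hmid1 : s < mid := by rw [hmiddef]; linarith
  have hmid2 : mid < w := by rw [hmiddef]; linarith
  apply IntervalIntegrable.trans (b := mid)
  · -- left piece
    have hg : IntervalIntegrable
        (fun τ => ((w - mid) ^ (-p) + (w - s) ^ (-p)) * (τ - s) ^ (-q)) volume s mid := by
      have h := (int_left hq s (mid - s)).const_mul ((w - mid) ^ (-p) + (w - s) ^ (-p))
      simpa using h
    refine hg.mono_fun (meas_aux w s p q).aestronglyMeasurable ?_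
    rw [Set.uIoc_of_le hmid1.le]
    filter_upwards [ae_restrict_mem measurableSet_Ioc] with τ hτ
    have h3 : 0 < w - mid := by linarith [hτ.2]
    have h4 : 0 < τ - s := by linarith [hτ.1]
    have h5 : 0 ≤ (τ - s) ^ (-q) := Real.rpow_nonneg h4.le _
    have h6 : (w - τ) ^ (-p) ≤ (w - mid) ^ (-p) + (w - s) ^ (-p) :=
      rpow_le_add_of_mem h3 (by linarith [hτ.2]) (by linarith [hτ.1])
    rw [Real.norm_eq_abs, Real.norm_eq_abs,
      abs_of_nonneg (mul_nonneg (Real.rpow_nonneg (by linarith [hτ.2]) _) h5),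
      abs_of_nonneg (mul_nonneg (add_nonneg (Real.rpow_nonneg h3.le _)
        (Real.rpow_nonneg (by linarith : (0:ℝ) ≤ w - s) _)) h5)]
    exact mul_le_mul_of_nonneg_right h6 h5
  · -- right piece
    have hg : IntervalIntegrable
        (fun τ => ((mid - s) ^ (-q) + (w - s) ^ (-q)) * (w - τ) ^ (-p)) volume mid w := by
      have h := (int_right hp w (w - mid)).const_mul ((mid - s) ^ (-q) + (w - s) ^ (-q))
      simpa using h
    refine hg.mono_fun (meas_aux w s p q).aestronglyMeasurable ?_
    rw [Set.uIoc_of_le hmid2.le]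
    filter_upwards [ae_restrict_mem measurableSet_Ioc] with τ hτ
    have h3 : 0 < mid - s := by linarith
    have h4 : 0 ≤ w - τ := by linarith [hτ.2]
    have h5 : 0 ≤ (w - τ) ^ (-p) := Real.rpow_nonneg h4 _
    have h6 : (τ - s) ^ (-q) ≤ (mid - s) ^ (-q) + (w - s) ^ (-q) :=
      rpow_le_add_of_mem h3 (by linarith [hτ.1]) (by linarith [hτ.2])
    rw [Real.norm_eq_abs, Real.norm_eq_abs,
      abs_of_nonneg (mul_nonneg h5 (Real.rpow_nonneg (by linarith [hτ.1]) _)),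
      abs_of_nonneg (mul_nonneg (add_nonneg (Real.rpow_nonneg h3.le _)
        (Real.rpow_nonneg (by linarith : (0:ℝ) ≤ w - s) _)) h5)]
    calc (w - τ) ^ (-p) * (τ - s) ^ (-q)
        ≤ (w - τ) ^ (-p) * ((mid - s) ^ (-q) + (w - s) ^ (-q)) :=
          mul_le_mul_of_nonneg_left h6 h5
      _ = ((mid - s) ^ (-q) + (w - s) ^ (-q)) * (w - τ) ^ (-p) := by ring

lemma betaValue (p q : ℝ) {s w : ℝ} (hsw : s < w) :
    ∫ τ in s..w, (w - τ) ^ (-p) * (τ - s) ^ (-q)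
      = (w - s) ^ (1 - p - q) * ∫ x in (0:ℝ)..1, (1 - x) ^ (-p) * x ^ (-q) := by
  have hL : 0 < w - s := by linarith
  set L : ℝ := w - s with hLdef
  have h1 : (∫ τ in s..w, (w - τ) ^ (-p) * (τ - s) ^ (-q))
      = ∫ u in (0:ℝ)..L, (L - u) ^ (-p) * u ^ (-q) := by
    have h := intervalIntegral.integral_comp_add_right (a := (0:ℝ)) (b := L)
      (fun τ => (w - τ) ^ (-p) * (τ - s) ^ (-q)) s
    rw [show (0:ℝ) + s = s by ring, show L + s = w by rw [hLdef]; ring] at h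
    rw [← h]
    congr 1
    funext u
    rw [show w - (u + s) = L - u by rw [hLdef]; ring, show u + s - s = u by ring]
  have h2 : (∫ u in (0:ℝ)..L, (L - u) ^ (-p) * u ^ (-q))
      = L • ∫ x in (0:ℝ)..1, (L - x * L) ^ (-p) * (x * L) ^ (-q) := by
    have h := intervalIntegral.integral_comp_mul_right (a := (0:ℝ)) (b := 1)
      (fun u => (L - u) ^ (-p) * u ^ (-q)) hL.ne'
    rw [show (0:ℝ) * L = 0 by ring, show (1:ℝ) * L = L by ring] at h
    rw [show (∫ x in (0:ℝ)..1, (L - x * L) ^ (-p) * (x * L) ^ (-q))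
      = ∫ x in (0:ℝ)..1, (fun u => (L - u) ^ (-p) * u ^ (-q)) (x * L) from rfl, h,
      smul_smul, mul_inv_cancel₀ hL.ne', one_smul]
  have h3 : (∫ x in (0:ℝ)..1, (L - x * L) ^ (-p) * (x * L) ^ (-q))
      = L ^ (-p - q) * ∫ x in (0:ℝ)..1, (1 - x) ^ (-p) * x ^ (-q) := by
    rw [← intervalIntegral.integral_const_mul]
    apply intervalIntegral.integral_congr
    intro x hx
    dsimp only
    rw [Set.uIcc_of_le (by norm_num : (0:ℝ) ≤ 1)] at hx
    have hx0 : 0 ≤ x := hx.1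
    have hx1 : 0 ≤ 1 - x := by linarith [hx.2]
    have e1 : L - x * L = L * (1 - x) := by ring
    have e2 : x * L = L * x := by ring
    rw [e1, e2, Real.mul_rpow hL.le hx1, Real.mul_rpow hL.le hx0,
      show -p - q = -p + -q by ring, Real.rpow_add hL]
    ring
  rw [h1, h2, h3, smul_eq_mul]
  rw [show (1:ℝ) - p - q = 1 + (-p - q) by ring, Real.rpow_add hL, Real.rpow_one]
  ring

lemma betaK_nonneg (p q : ℝ) : 0 ≤ ∫ x in (0:ℝ)..1, (1 - x) ^ (-p) * x ^ (-q) := by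
  apply intervalIntegral.integral_nonneg (by norm_num)
  intro u hu
  exact mul_nonneg (Real.rpow_nonneg (by linarith [hu.2]) _)
    (Real.rpow_nonneg (by linarith [hu.1]) _)

lemma integrand_nonneg {p q s w τ : ℝ} (h1 : s ≤ τ) (h2 : τ ≤ w) :
    0 ≤ (w - τ) ^ (-p) * (τ - s) ^ (-q) :=
  mul_nonneg (Real.rpow_nonneg (by linarith) _) (Real.rpow_nonneg (by linarith) _)

lemma inner_le {p q : ℝ} (hp : p < 1) (hq : q < 1) {s w A B : ℝ}
    (hsA : s ≤ A) (hAB : A ≤ B) (hBw : B ≤ w) (hsw : s < w) :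
    (∫ τ in A..B, (w - τ) ^ (-p) * (τ - s) ^ (-q))
      ≤ (w - s) ^ (1 - p - q) * ∫ x in (0:ℝ)..1, (1 - x) ^ (-p) * x ^ (-q) := by
  rw [← betaValue p q hsw]
  have hbig := betaIntegrable hp hq hsw
  have hsub1 : Set.uIcc s A ⊆ Set.uIcc s w := by
    rw [Set.uIcc_of_le hsA, Set.uIcc_of_le hsw.le]
    exact Set.Icc_subset_Icc le_rfl (by linarith)
  have hsub2 : Set.uIcc A B ⊆ Set.uIcc s w := by
    rw [Set.uIcc_of_le hAB, Set.uIcc_of_le hsw.le]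
    exact Set.Icc_subset_Icc hsA (by linarith)
  have hsub3 : Set.uIcc B w ⊆ Set.uIcc s w := by
    rw [Set.uIcc_of_le hBw, Set.uIcc_of_le hsw.le]
    exact Set.Icc_subset_Icc (by linarith) le_rfl
  have i1 := hbig.mono_set hsub1
  have i2 := hbig.mono_set hsub2
  have i3 := hbig.mono_set hsub3
  have e1 : (∫ τ in s..w, (w - τ) ^ (-p) * (τ - s) ^ (-q))
      = (∫ τ in s..A, (w - τ) ^ (-p) * (τ - s) ^ (-q))
        + ((∫ τ in A..B, (w - τ) ^ (-p) * (τ - s) ^ (-q))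
        + ∫ τ in B..w, (w - τ) ^ (-p) * (τ - s) ^ (-q)) := by
    rw [intervalIntegral.integral_add_adjacent_intervals i2 i3,
      intervalIntegral.integral_add_adjacent_intervals i1 (i2.trans i3)]
  have n1 : 0 ≤ ∫ τ in s..A, (w - τ) ^ (-p) * (τ - s) ^ (-q) :=
    intervalIntegral.integral_nonneg hsA fun u hu =>
      integrand_nonneg hu.1 (by linarith [hu.2])
  have n3 : 0 ≤ ∫ τ in B..w, (w - τ) ^ (-p) * (τ - s) ^ (-q) :=
    intervalIntegral.integral_nonneg hBw fun u hu =>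
      integrand_nonneg (by linarith [hu.1]) hu.2
  linarith [e1]

lemma master (a b c T : ℝ) (hb : b < 1) (hc : c < 1) (hT : 0 < T)
    {M m : ℕ} (hM : 2 ≤ M) (hm2 : 2 ≤ m) (hmM : m ≤ M)
    (t : ℕ → ℝ) (ht : ∀ k, t k = (k : ℝ) * T / M) :
    (∑ j ∈ Finset.range m, ∑ i ∈ Finset.range j,
        ∫ s in t i..t (i + 1), ∫ τ in t j..t (j + 1),
          (t m - s) ^ (-a) * (t m - τ) ^ (-b) * (τ - s) ^ (-c))
      ≤ (∫ x in (0:ℝ)..1, (1 - x) ^ (-b) * x ^ (-c)) *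
          ∫ u in (T / M)..(t m), u ^ (1 - (a + b + c)) := by
  have hM0 : (0:ℝ) < M := by
    have : (0:ℕ) < M := by omega
    exact_mod_cast this
  have hmono : StrictMono t := by
    intro k l hkl
    rw [ht, ht]
    have hk : (k:ℝ) < l := by exact_mod_cast hkl
    gcongr
  set w : ℝ := t m with hwdef
  set K : ℝ := ∫ x in (0:ℝ)..1, (1 - x) ^ (-b) * x ^ (-c) with hKdef
  have hK0 : 0 ≤ K := betaK_nonneg b c
  set h : ℕ → ℝ → ℝ := fun j s => ∫ τ in t j..t (j + 1),
      (w - s) ^ (-a) * (w - τ) ^ (-b) * (τ - s) ^ (-c) with hhdef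
  have hj_eq : ∀ j s, h j s
      = (w - s) ^ (-a) * ∫ τ in t j..t (j + 1), (w - τ) ^ (-b) * (τ - s) ^ (-c) := by
    intro j s
    rw [hhdef]
    simp only [mul_assoc]
    rw [intervalIntegral.integral_const_mul]
  -- generic facts
  have hm1m : m - 1 < m := by omega
  have htm1 : t (m - 1) < w := hmono hm1m
  -- pointwise key bound
  have key : ∀ i, i < m - 1 → ∀ s ∈ Set.Icc (t i) (t (i + 1)),
      (∑ j ∈ Finset.Ico (i + 1) m, ∫ τ in t j..t (j + 1),
          (w - τ) ^ (-b) * (τ - s) ^ (-c)) ≤ (w - s) ^ (1 - b - c) * K := by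
    intro i hi s hs
    have hsi1 : s ≤ t (i + 1) := hs.2
    have hsw : s < w := lt_of_le_of_lt
      (hsi1.trans (hmono.monotone (by omega : i + 1 ≤ m - 1))) htm1
    have hint := betaIntegrable hb hc hsw (p := b) (q := c)
    have hcell : ∀ j ∈ Set.Ico (i + 1) m,
        IntervalIntegrable (fun τ => (w - τ) ^ (-b) * (τ - s) ^ (-c))
          volume (t j) (t (j + 1)) := by
      intro j hj
      rw [Set.mem_Ico] at hj
      refine hint.mono_set ?_
      rw [Set.uIcc_of_le (hmono.monotone (Nat.le_succ j)), Set.uIcc_of_le hsw.le]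
      exact Set.Icc_subset_Icc (hsi1.trans (hmono.monotone hj.1))
        (hmono.monotone hj.2)
    rw [intervalIntegral.sum_integral_adjacent_intervals_Ico (by omega : i + 1 ≤ m) hcell]
    exact inner_le hb hc (hsi1.trans le_rfl) (hmono.monotone (by omega : i + 1 ≤ m))
      le_rfl hsw
  -- strong measurability of h j
  have hhmeas : ∀ j : ℕ, StronglyMeasurable (h j) := by
    intro j
    have hFm : StronglyMeasurable (fun z : ℝ × ℝ =>
        (w - z.1) ^ (-a) * (w - z.2) ^ (-b) * (z.2 - z.1) ^ (-c)) := by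
      apply Measurable.stronglyMeasurable; fun_prop
    have h1 := hFm.integral_prod_right' (ν := volume.restrict (Set.Ioc (t j) (t (j + 1))))
    have hhj : h j = fun s => ∫ y in Set.Ioc (t j) (t (j + 1)),
        (w - s) ^ (-a) * (w - y) ^ (-b) * (y - s) ^ (-c) := by
      funext s
      rw [hhdef]
      exact intervalIntegral.integral_of_le (hmono.monotone (Nat.le_succ j))
    rw [hhj]
    exact h1
  -- the majorant
  set Hc : ℝ → ℝ := fun s => (w - s) ^ (1 - (a + b + c)) * K with hHcdef
  have hHcont : ∀ i, i < m - 1 → IntervalIntegrable Hc volume (t i) (t (i + 1)) := by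
    intro i hi
    apply ContinuousOn.intervalIntegrable
    apply ContinuousOn.mul ?_ continuousOn_const
    apply ContinuousOn.rpow_const ((continuous_const.sub continuous_id).continuousOn)
    intro x hx
    rw [Set.uIcc_of_le (hmono.monotone (Nat.le_succ i))] at hx
    left
    have : x ≤ t (i + 1) := hx.2
    have : x < w := lt_of_le_of_lt
      (this.trans (hmono.monotone (by omega : i + 1 ≤ m - 1))) htm1
    exact sub_ne_zero.mpr (ne_of_gt this)
  -- pointwise bounds for h j on cell i
  have hbound : ∀ i, i < m - 1 → ∀ j ∈ Finset.Ico (i + 1) m,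
      ∀ s ∈ Set.Icc (t i) (t (i + 1)), 0 ≤ h j s ∧ h j s ≤ Hc s := by
    intro i hi j hj s hs
    rw [Finset.mem_Ico] at hj
    have hsi1 : s ≤ t (i + 1) := hs.2
    have hstj : s ≤ t j := hsi1.trans (hmono.monotone hj.1)
    have hsw : s < w := lt_of_le_of_lt
      (hsi1.trans (hmono.monotone (by omega : i + 1 ≤ m - 1))) htm1
    have hws : (0:ℝ) < w - s := by linarith
    have hinner0 : 0 ≤ ∫ τ in t j..t (j + 1), (w - τ) ^ (-b) * (τ - s) ^ (-c) := by
      apply intervalIntegral.integral_nonneg (hmono.monotone (Nat.le_succ j))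
      intro τ hτ
      exact integrand_nonneg (hstj.trans hτ.1) (hτ.2.trans (hmono.monotone hj.2))
    have hinnerle := inner_le hb hc hstj (hmono.monotone (Nat.le_succ j))
      (hmono.monotone hj.2) hsw
    constructor
    · rw [hj_eq]
      exact mul_nonneg (Real.rpow_nonneg hws.le _) hinner0
    · rw [hj_eq, hHcdef]
      calc (w - s) ^ (-a) * ∫ τ in t j..t (j + 1), (w - τ) ^ (-b) * (τ - s) ^ (-c)
          ≤ (w - s) ^ (-a) * ((w - s) ^ (1 - b - c) * K) :=
            mul_le_mul_of_nonneg_left hinnerle (Real.rpow_nonneg hws.le _)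
        _ = (w - s) ^ (1 - (a + b + c)) * K := by
            rw [show (1:ℝ) - (a + b + c) = -a + (1 - b - c) by ring,
              Real.rpow_add hws]
            ring
  -- integrability of h j on cell i
  have hjint : ∀ i, i < m - 1 → ∀ j ∈ Finset.Ico (i + 1) m,
      IntervalIntegrable (h j) volume (t i) (t (i + 1)) := by
    intro i hi j hj
    refine (hHcont i hi).mono_fun ((hhmeas j).aestronglyMeasurable) ?_
    rw [Set.uIoc_of_le (hmono.monotone (Nat.le_succ i))]
    filter_upwards [ae_restrict_mem measurableSet_Ioc] with s hs
    have hs' : s ∈ Set.Icc (t i) (t (i + 1)) := ⟨hs.1.le, hs.2⟩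
    obtain ⟨h0, h1⟩ := hbound i hi j hj s hs'
    rw [Real.norm_eq_abs, Real.norm_eq_abs, abs_of_nonneg h0,
      abs_of_nonneg (le_trans h0 h1)]
    exact h1
  -- per-i estimate
  have step_i : ∀ i, i < m - 1 →
      (∑ j ∈ Finset.Ico (i + 1) m, ∫ s in t i..t (i + 1), h j s)
        ≤ ∫ s in t i..t (i + 1), Hc s := by
    intro i hi
    rw [← intervalIntegral.integral_finset_sum (hjint i hi)]
    refine intervalIntegral.integral_mono_on
      (f := fun x => ∑ j ∈ Finset.Ico (i + 1) m, h j x) (g := Hc)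
      (hmono.monotone (Nat.le_succ i)) ?_ (hHcont i hi) ?_
    · have hsum := IntervalIntegrable.sum (μ := volume) (a := t i) (b := t (i + 1))
        (Finset.Ico (i + 1) m) (hjint i hi)
      have heq : (fun x => ∑ j ∈ Finset.Ico (i + 1) m, h j x)
          = ∑ j ∈ Finset.Ico (i + 1) m, h j := by
        funext x
        simp [Finset.sum_apply]
      rw [heq]
      exact hsum
    intro s hs
    have hsi1 : s ≤ t (i + 1) := hs.2
    have hsw : s < w := lt_of_le_of_lt
      (hsi1.trans (hmono.monotone (by omega : i + 1 ≤ m - 1))) htm1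
    have hws : (0:ℝ) < w - s := by linarith
    calc (∑ j ∈ Finset.Ico (i + 1) m, h j s)
        = (w - s) ^ (-a) * ∑ j ∈ Finset.Ico (i + 1) m,
            ∫ τ in t j..t (j + 1), (w - τ) ^ (-b) * (τ - s) ^ (-c) := by
          rw [Finset.mul_sum]
          exact Finset.sum_congr rfl fun j _ => hj_eq j s
      _ ≤ (w - s) ^ (-a) * ((w - s) ^ (1 - b - c) * K) :=
          mul_le_mul_of_nonneg_left (key i hi s hs) (Real.rpow_nonneg hws.le _)
      _ = Hc s := by
          show _ = (w - s) ^ (1 - (a + b + c)) * K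
          rw [show (1:ℝ) - (a + b + c) = -a + (1 - b - c) by ring,
            Real.rpow_add hws]
          ring
  -- reorganize the double sum
  have hswap : (∑ j ∈ Finset.range m, ∑ i ∈ Finset.range j,
        ∫ s in t i..t (i + 1), h j s)
      = ∑ i ∈ Finset.range m, ∑ j ∈ Finset.Ico (i + 1) m,
        ∫ s in t i..t (i + 1), h j s := by
    simp only [← Nat.Ico_zero_eq_range]
    rw [← Finset.sum_Ico_Ico_comm']
  show (∑ j ∈ Finset.range m, ∑ i ∈ Finset.range j, ∫ s in t i..t (i + 1), h j s)
      ≤ K * ∫ u in (T / M)..w, u ^ (1 - (a + b + c))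
  rw [hswap]
  have hsplit : (∑ i ∈ Finset.range m, ∑ j ∈ Finset.Ico (i + 1) m,
        ∫ s in t i..t (i + 1), h j s)
      = ∑ i ∈ Finset.range (m - 1), ∑ j ∈ Finset.Ico (i + 1) m,
        ∫ s in t i..t (i + 1), h j s := by
    conv_lhs => rw [show m = (m - 1) + 1 by omega]
    rw [Finset.sum_range_succ]
    rw [show (m - 1) + 1 = m by omega, Finset.Ico_self, Finset.sum_empty, add_zero]
  rw [hsplit]
  have ht0 : t 0 = 0 := by rw [ht]; simp
  calc (∑ i ∈ Finset.range (m - 1), ∑ j ∈ Finset.Ico (i + 1) m,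
        ∫ s in t i..t (i + 1), h j s)
      ≤ ∑ i ∈ Finset.range (m - 1), ∫ s in t i..t (i + 1), Hc s :=
        Finset.sum_le_sum fun i hi => step_i i (Finset.mem_range.mp hi)
    _ = ∫ s in (t 0)..(t (m - 1)), Hc s :=
        intervalIntegral.sum_integral_adjacent_intervals fun k hk => hHcont k hk
    _ = K * ∫ u in (T / M)..w, u ^ (1 - (a + b + c)) := by
        have hm1 : ((m - 1 : ℕ) : ℝ) = (m : ℝ) - 1 := by
          have h1 : (1:ℕ) ≤ m := by omega
          push_cast [Nat.cast_sub h1]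
          ring
        have hTM : w - t (m - 1) = T / M := by
          rw [hwdef, ht, ht, hm1]
          field_simp
          ring
        have hcomp := intervalIntegral.integral_comp_sub_left (a := (0:ℝ))
          (b := t (m - 1)) (fun u => u ^ (1 - (a + b + c))) w
        rw [hTM, sub_zero] at hcomp
        have hHc : (∫ s in (t 0)..(t (m - 1)), Hc s)
            = (∫ s in (0:ℝ)..t (m - 1), (w - s) ^ (1 - (a + b + c))) * K := by
          rw [ht0, ← intervalIntegral.integral_mul_const]
        rw [hHc, hcomp, mul_comm]

theorem stmt_2 (a b c T : ℝ) (hb : b < 1) (hc : c < 1) (hT : 0 < T) :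
    ∃ C > (0 : ℝ), ∀ M : ℕ, 2 ≤ M → ∀ m : ℕ, 2 ≤ m → m ≤ M →
      (let tpt : ℕ → ℝ := fun k => (k : ℝ) * T / (M : ℝ)
       let S : ℝ := ∑ j ∈ Finset.range m, ∑ i ∈ Finset.range j,
        ∫ s in tpt i..tpt (i + 1), ∫ τ in tpt j..tpt (j + 1),
          (tpt m - s) ^ (-a) * (tpt m - τ) ^ (-b) * (τ - s) ^ (-c)
       (a + b + c < 2 → S ≤ C) ∧
       (a + b + c = 2 → S ≤ C * Real.log M) ∧
       (2 < a + b + c → S ≤ C * (M : ℝ) ^ (a + b + c - 2))) := by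
  set K : ℝ := ∫ x in (0:ℝ)..1, (1 - x) ^ (-b) * x ^ (-c) with hKdef
  have hK0 : 0 ≤ K := betaK_nonneg b c
  rcases lt_trichotomy (a + b + c) 2 with hσ | hσ | hσ
  · -- subcritical case
    have h2σ : (0:ℝ) < 2 - (a + b + c) := by linarith
    have hC0 : 0 ≤ K * T ^ (2 - (a + b + c)) / (2 - (a + b + c)) :=
      div_nonneg (mul_nonneg hK0 (Real.rpow_nonneg hT.le _)) h2σ.le
    refine ⟨K * T ^ (2 - (a + b + c)) / (2 - (a + b + c)) + 1, by linarith, ?_⟩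
    intro M hM m hm2 hmM
    dsimp only
    refine ⟨fun _ => ?_, fun h2 => absurd h2 (ne_of_lt hσ),
      fun h2 => absurd h2 (by linarith)⟩
    have hmain := master a b c T hb hc hT hM hm2 hmM
      (fun k => (k : ℝ) * T / M) (fun k => rfl)
    refine le_trans hmain ?_
    -- bound the u-integral
    have hM0 : (0:ℝ) < M := by exact_mod_cast (by omega : 0 < M)
    have hm0 : (0:ℝ) < m := by exact_mod_cast (by omega : 0 < m)
    have hmM' : (m:ℝ) ≤ M := by exact_mod_cast hmM
    have hTM : (0:ℝ) < T / M := by positivity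
    have htm : (0:ℝ) < (m:ℝ) * T / M := by positivity
    have hTMtm : T / M ≤ (m:ℝ) * T / M := by
      apply (div_le_div_iff_of_pos_right hM0).mpr
      have hm1 : (1:ℝ) ≤ (m:ℝ) := by exact_mod_cast (by omega : 1 ≤ m)
      nlinarith [mul_nonneg (by linarith : (0:ℝ) ≤ (m:ℝ) - 1) hT.le]
    have h1σ : (-1:ℝ) < 1 - (a + b + c) := by linarith
    have hint0 : IntervalIntegrable (fun u : ℝ => u ^ (1 - (a + b + c)))
        volume 0 ((m:ℝ) * T / M) := intervalIntegral.intervalIntegrable_rpow' h1σ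
    have hi1 : IntervalIntegrable (fun u : ℝ => u ^ (1 - (a + b + c)))
        volume 0 (T / M) := hint0.mono_set (by
          rw [Set.uIcc_of_le hTM.le, Set.uIcc_of_le htm.le]
          exact Set.Icc_subset_Icc le_rfl hTMtm)
    have hi2 : IntervalIntegrable (fun u : ℝ => u ^ (1 - (a + b + c)))
        volume (T / M) ((m:ℝ) * T / M) := hint0.mono_set (by
          rw [Set.uIcc_of_le hTMtm, Set.uIcc_of_le htm.le]
          exact Set.Icc_subset_Icc hTM.le le_rfl)
    have hsplit := intervalIntegral.integral_add_adjacent_intervals hi1 hi2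
    have hn1 : 0 ≤ ∫ u in (0:ℝ)..(T / M), u ^ (1 - (a + b + c)) :=
      intervalIntegral.integral_nonneg hTM.le fun u hu => Real.rpow_nonneg hu.1 _
    have hval : (∫ u in (0:ℝ)..((m:ℝ) * T / M), u ^ (1 - (a + b + c)))
        = ((m:ℝ) * T / M) ^ (2 - (a + b + c)) / (2 - (a + b + c)) := by
      rw [integral_rpow (Or.inl h1σ)]
      rw [Real.zero_rpow (by linarith : 1 - (a + b + c) + 1 ≠ 0)]
      norm_num
      rw [show 1 - (a + b + c) + 1 = 2 - (a + b + c) by ring]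
    have htmT : ((m:ℝ) * T / M) ≤ T := by
      rw [div_le_iff₀ hM0]
      nlinarith
    have hend : (∫ u in (T / M)..((m:ℝ) * T / M), u ^ (1 - (a + b + c)))
        ≤ T ^ (2 - (a + b + c)) / (2 - (a + b + c)) := by
      have h1 : (∫ u in (T / M)..((m:ℝ) * T / M), u ^ (1 - (a + b + c)))
          ≤ ((m:ℝ) * T / M) ^ (2 - (a + b + c)) / (2 - (a + b + c)) := by
        rw [← hval]
        linarith [hsplit]
      refine h1.trans ?_
      apply (div_le_div_iff_of_pos_right h2σ).mpr
      exact Real.rpow_le_rpow htm.le htmT h2σ.le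
    calc K * ∫ u in (T / M)..((m:ℝ) * T / M), u ^ (1 - (a + b + c))
        ≤ K * (T ^ (2 - (a + b + c)) / (2 - (a + b + c))) :=
          mul_le_mul_of_nonneg_left hend hK0
      _ = K * T ^ (2 - (a + b + c)) / (2 - (a + b + c)) := by ring
      _ ≤ K * T ^ (2 - (a + b + c)) / (2 - (a + b + c)) + 1 := by linarith
  · -- critical case
    refine ⟨K + 1, by linarith, ?_⟩
    intro M hM m hm2 hmM
    dsimp only
    refine ⟨fun h2 => absurd hσ (ne_of_lt h2).symm.symm, fun _ => ?_,
      fun h2 => absurd hσ (ne_of_gt h2).symm.symm⟩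
    have hmain := master a b c T hb hc hT hM hm2 hmM
      (fun k => (k : ℝ) * T / M) (fun k => rfl)
    refine le_trans hmain ?_
    have hM0 : (0:ℝ) < M := by exact_mod_cast (by omega : 0 < M)
    have hm0 : (0:ℝ) < m := by exact_mod_cast (by omega : 0 < m)
    have hmM' : (m:ℝ) ≤ M := by exact_mod_cast hmM
    have hTM : (0:ℝ) < T / M := by positivity
    have htm : (0:ℝ) < (m:ℝ) * T / M := by positivity
    have hcongr : (∫ u in (T / M)..((m:ℝ) * T / M), u ^ (1 - (a + b + c)))
        = ∫ u in (T / M)..((m:ℝ) * T / M), u⁻¹ := by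
      apply intervalIntegral.integral_congr
      intro u hu
      rw [hσ, show (1:ℝ) - 2 = -1 by norm_num]
      exact Real.rpow_neg_one u
    have hvalue : (∫ u in (T / M)..((m:ℝ) * T / M), u⁻¹) = Real.log m := by
      rw [integral_inv_of_pos hTM htm]
      congr 1
      have hT0 : T ≠ 0 := hT.ne'
      have hM0' : (M:ℝ) ≠ 0 := hM0.ne'
      field_simp
    have hlog : Real.log m ≤ Real.log M := by
      apply Real.log_le_log hm0 hmM'
    have hlogM : 0 ≤ Real.log M := Real.log_nonneg (by exact_mod_cast (by omega : 1 ≤ M))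
    calc K * ∫ u in (T / M)..((m:ℝ) * T / M), u ^ (1 - (a + b + c))
        = K * Real.log m := by rw [hcongr, hvalue]
      _ ≤ K * Real.log M := mul_le_mul_of_nonneg_left hlog hK0
      _ ≤ (K + 1) * Real.log M := by nlinarith
  · -- supercritical case
    have h2σ : (0:ℝ) < (a + b + c) - 2 := by linarith
    have hC0 : 0 ≤ K * T ^ (2 - (a + b + c)) / ((a + b + c) - 2) :=
      div_nonneg (mul_nonneg hK0 (Real.rpow_nonneg hT.le _)) h2σ.le
    refine ⟨K * T ^ (2 - (a + b + c)) / ((a + b + c) - 2) + 1, by linarith, ?_⟩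
    intro M hM m hm2 hmM
    dsimp only
    refine ⟨fun h2 => absurd hσ (by linarith), fun h2 => absurd h2 (ne_of_gt hσ),
      fun _ => ?_⟩
    have hmain := master a b c T hb hc hT hM hm2 hmM
      (fun k => (k : ℝ) * T / M) (fun k => rfl)
    refine le_trans hmain ?_
    have hM0 : (0:ℝ) < M := by exact_mod_cast (by omega : 0 < M)
    have hm0 : (0:ℝ) < m := by exact_mod_cast (by omega : 0 < m)
    have hmM' : (m:ℝ) ≤ M := by exact_mod_cast hmM
    have hTM : (0:ℝ) < T / M := by positivity
    have htm : (0:ℝ) < (m:ℝ) * T / M := by positivity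
    have hTMtm : T / M ≤ (m:ℝ) * T / M := by
      apply (div_le_div_iff_of_pos_right hM0).mpr
      have hm1 : (1:ℝ) ≤ (m:ℝ) := by exact_mod_cast (by omega : 1 ≤ m)
      nlinarith [mul_nonneg (by linarith : (0:ℝ) ≤ (m:ℝ) - 1) hT.le]
    have hne : (1:ℝ) - (a + b + c) ≠ -1 := by
      intro h; apply (ne_of_gt hσ); linarith
    have hnotmem : (0:ℝ) ∉ Set.uIcc (T / M) ((m:ℝ) * T / M) := by
      rw [Set.uIcc_of_le hTMtm]
      intro hmem
      exact absurd hmem.1 (not_le.mpr hTM)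
    have hval : (∫ u in (T / M)..((m:ℝ) * T / M), u ^ (1 - (a + b + c)))
        = (((m:ℝ) * T / M) ^ (2 - (a + b + c)) - (T / M) ^ (2 - (a + b + c)))
            / (2 - (a + b + c)) := by
      rw [integral_rpow (Or.inr ⟨hne, hnotmem⟩)]
      rw [show 1 - (a + b + c) + 1 = 2 - (a + b + c) by ring]
    have hA0 : 0 ≤ ((m:ℝ) * T / M) ^ (2 - (a + b + c)) := Real.rpow_nonneg htm.le _
    have hIle : (∫ u in (T / M)..((m:ℝ) * T / M), u ^ (1 - (a + b + c)))
        ≤ (T / M) ^ (2 - (a + b + c)) / ((a + b + c) - 2) := by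
      rw [hval]
      have e : (((m:ℝ) * T / M) ^ (2 - (a + b + c)) - (T / M) ^ (2 - (a + b + c)))
            / (2 - (a + b + c))
          = ((T / M) ^ (2 - (a + b + c)) - ((m:ℝ) * T / M) ^ (2 - (a + b + c)))
            / ((a + b + c) - 2) := by
        rw [div_eq_div_iff (by linarith : (2:ℝ) - (a + b + c) ≠ 0)
          (by linarith : (a + b + c) - (2:ℝ) ≠ 0)]
        ring
      rw [e]
      apply (div_le_div_iff_of_pos_right h2σ).mpr
      linarith
    have hpow : (T / (M:ℝ)) ^ (2 - (a + b + c))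
        = T ^ (2 - (a + b + c)) * (M:ℝ) ^ ((a + b + c) - 2) := by
      rw [Real.div_rpow hT.le hM0.le,
        show (a + b + c) - 2 = -(2 - (a + b + c)) by ring,
        Real.rpow_neg hM0.le, div_eq_mul_inv]
    have hMpow : (0:ℝ) < (M:ℝ) ^ (a + b + c - 2) := Real.rpow_pos_of_pos hM0 _
    calc K * ∫ u in (T / M)..((m:ℝ) * T / M), u ^ (1 - (a + b + c))
        ≤ K * ((T / M) ^ (2 - (a + b + c)) / ((a + b + c) - 2)) :=
          mul_le_mul_of_nonneg_left hIle hK0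
      _ = K * T ^ (2 - (a + b + c)) / ((a + b + c) - 2) * (M:ℝ) ^ (a + b + c - 2) := by
          rw [hpow]
          ring
      _ ≤ (K * T ^ (2 - (a + b + c)) / ((a + b + c) - 2) + 1)
            * (M:ℝ) ^ (a + b + c - 2) := by nlinarith
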